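/- Ekeland's variational principle: Let (X,d) be a complete metric space and f : X → ℝ ∪ {+∞} a lower semicontinuous function bounded below and not identically +∞. For every ε > 0 and every x₀ with f(x₀) ≤ inf f + ε, and every λ > 0, there exists x̄ ∈ X with f(x̄) ≤ f(x₀), d(x̄, x₀) ≤ λ, and f(x) > f(x̄) − (ε/λ) d(x, x̄) for all x ≠ x̄. -/

import Mathlib

open Filter

theorem ekeland_real {Y : Type*} [MetricSpace Y] [CompleteSpace Y]
    (g : Y → ℝ) (hlsc : LowerSemicontinuous g) (B : ℝ) (hB : ∀ y, B ≤ g y)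
    (α : ℝ) (hα : 0 < α) (y₀ : Y) :
    ∃ ybar : Y, g ybar + α * dist ybar y₀ ≤ g y₀ ∧
      ∀ y : Y, y ≠ ybar → g ybar - α * dist y ybar < g y := by
  set S : Y → Set Y := fun y => {x | g x + α * dist x y ≤ g y} with hS
  have hself : ∀ y, y ∈ S y := by intro y; simp [hS]
  have hmemle : ∀ {x y}, x ∈ S y → g x ≤ g y := by
    intro x y hx
    have : 0 ≤ α * dist x y := mul_nonneg hα.le dist_nonneg
    simpa using le_trans (by linarith) hx
  have hSsub : ∀ {x y}, x ∈ S y → S x ⊆ S y := by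
    intro x y hx z hz
    have h1 : g z + α * dist z x ≤ g x := hz
    have h2 : g x + α * dist x y ≤ g y := hx
    have h3 : dist z y ≤ dist z x + dist x y := dist_triangle _ _ _
    have h4 : α * dist z y ≤ α * (dist z x + dist x y) :=
      mul_le_mul_of_nonneg_left h3 hα.le
    show g z + α * dist z y ≤ g y
    nlinarith
  have hne : ∀ y, (g '' S y).Nonempty := fun y => ⟨g y, y, hself y, rfl⟩
  have hbdd : ∀ y, BddBelow (g '' S y) := by
    intro y; exact ⟨B, by rintro _ ⟨x, -, rfl⟩; exact hB x⟩
  set c : Y → ℝ := fun y => sInf (g '' S y) with hc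
  have hc_le : ∀ y, c y ≤ g y := fun y => csInf_le (hbdd y) ⟨y, hself y, rfl⟩
  have hc_le' : ∀ y x, x ∈ S y → c y ≤ g x := fun y x hx =>
    csInf_le (hbdd y) ⟨x, hx, rfl⟩
  have hchoice : ∀ y, ∃ x, x ∈ S y ∧ g x ≤ (c y + g y) / 2 := by
    intro y
    by_cases h : c y < g y
    · obtain ⟨_, ⟨x, hx, rfl⟩, hlt⟩ := exists_lt_of_csInf_lt (hne y) (by linarith : sInf (g '' S y) < (c y + g y) / 2)
      exact ⟨x, hx, hlt.le⟩
    · exact ⟨y, hself y, by push_neg at h; linarith⟩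
  choose next hnext1 hnext2 using hchoice
  set u : ℕ → Y := fun n => next^[n] y₀ with hu
  have hu0 : u 0 = y₀ := rfl
  have husucc : ∀ n, u (n + 1) = next (u n) := by
    intro n; simp [hu, Function.iterate_succ_apply']
  have hchain : ∀ n p, n ≤ p → u p ∈ S (u n) := by
    intro n p hnp
    induction p with
    | zero => simp_all [hself]
    | succ k ih =>
      rcases Nat.lt_or_ge n (k+1) with h | h
      · have hk : n ≤ k := Nat.lt_succ_iff.mp h
        have : u (k+1) ∈ S (u k) := by rw [husucc]; exact hnext1 _
        exact hSsub (ih hk) this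
      · have : n = k + 1 := le_antisymm hnp h
        subst this; exact hself _
  have hanti : Antitone fun n => g (u n) := by
    apply antitone_nat_of_succ_le
    intro n
    exact hmemle (by rw [husucc]; exact hnext1 _)
  have hbddL : BddBelow (Set.range fun n => g (u n)) :=
    ⟨B, by rintro _ ⟨n, rfl⟩; exact hB _⟩
  set L : ℝ := ⨅ n, g (u n) with hL
  have hL_le : ∀ n, L ≤ g (u n) := fun n => ciInf_le hbddL n
  have htend : Tendsto (fun n => g (u n)) atTop (nhds L) :=
    tendsto_atTop_ciInf hanti hbddL
  -- Cauchy
  have hcauchy : CauchySeq u := by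
    apply cauchySeq_of_le_tendsto_0' (fun n => (g (u n) - L) / α)
    · intro n m hnm
      have hm : u m ∈ S (u n) := hchain n m hnm
      have h1 : g (u m) + α * dist (u m) (u n) ≤ g (u n) := hm
      have h2 : L ≤ g (u m) := hL_le m
      rw [dist_comm]
      rw [le_div_iff₀ hα]
      linarith [mul_comm α (dist (u m) (u n))]
    · have : Tendsto (fun n => g (u n) - L) atTop (nhds (L - L)) :=
        htend.sub tendsto_const_nhds
      simpa using this.div_const α
  obtain ⟨ybar, hy⟩ := cauchySeq_tendsto_of_complete hcauchy
  have hclose : ∀ n, ybar ∈ S (u n) := by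
    intro n
    by_contra h
    have hlt : g (u n) < g ybar + α * dist ybar (u n) := by
      simpa [hS, not_le] using h
    set r : ℝ := g ybar + α * dist ybar (u n) - g (u n) with hr
    have hrpos : 0 < r := by linarith
    have h1 : ∀ᶠ x in nhds ybar, g ybar - r / 2 < g x :=
      hlsc ybar (g ybar - r / 2) (by linarith)
    have h2 : ∀ᶠ x in nhds ybar, dist ybar (u n) - r / (2 * α) < dist x (u n) := by
      have hcont : Continuous fun x : Y => dist x (u n) := continuous_dist.comp
        (continuous_id.prodMk continuous_const)
      have : dist ybar (u n) - r / (2 * α) < dist ybar (u n) := by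
        have : 0 < r / (2 * α) := div_pos hrpos (by linarith)
        linarith
      exact hcont.continuousAt.eventually (eventually_gt_nhds this)
    have h3 : ∀ᶠ p in atTop, g ybar - r / 2 < g (u p) ∧
        dist ybar (u n) - r / (2 * α) < dist (u p) (u n) :=
      (hy.eventually h1).and (hy.eventually h2)
    obtain ⟨p, hp, hpn⟩ := (h3.and (eventually_ge_atTop n)).exists
    have hmem : g (u p) + α * dist (u p) (u n) ≤ g (u n) := hchain n p hpn
    have h4 : α * (dist ybar (u n) - r / (2 * α)) < α * dist (u p) (u n) :=
      mul_lt_mul_of_pos_left hp.2 hα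
    have h5 : α * (r / (2 * α)) = r / 2 := by field_simp
    nlinarith [hp.1]
  refine ⟨ybar, ?_, ?_⟩
  · have := hclose 0; rwa [hu0] at this
  · intro y hy'
    by_contra hcon
    push_neg at hcon
    have hyS : y ∈ S ybar := by
      show g y + α * dist y ybar ≤ g ybar; linarith
    have hyn : ∀ n, y ∈ S (u n) := fun n => hSsub (hclose n) hyS
    have h1 : ∀ n, 2 * g (u (n + 1)) - g (u n) ≤ g y := by
      intro n
      have hcn : c (u n) ≤ g y := hc_le' _ _ (hyn n)
      have h2 := hnext2 (u n)
      rw [← husucc] at h2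
      linarith
    have htend2 : Tendsto (fun n => 2 * g (u (n + 1)) - g (u n)) atTop
        (nhds (2 * L - L)) := by
      have h2 : Tendsto (fun n => g (u (n + 1))) atTop (nhds L) :=
        htend.comp (tendsto_add_atTop_nat 1)
      exact (h2.const_mul 2).sub htend
    have hLy : 2 * L - L ≤ g y := le_of_tendsto htend2 (Eventually.of_forall h1)
    have hbarL : g ybar ≤ L := le_ciInf fun n => hmemle (hclose n)
    have hd : dist y ybar ≤ 0 := by
      have : g y + α * dist y ybar ≤ g ybar := hyS
      nlinarith
    exact hy' (by rwa [dist_le_zero] at hd)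

/-- Ekeland's variational principle. -/
theorem ekeland_variational_principle {X : Type*} [MetricSpace X] [CompleteSpace X]
    (f : X → EReal) (hlsc : LowerSemicontinuous f)
    (hbdd : BddBelow (Set.range f)) (hbot : ∀ x, f x ≠ ⊥)
    (hproper : ∃ x, f x ≠ ⊤)
    (ε : ℝ) (hε : 0 < ε) (lam : ℝ) (hlam : 0 < lam)
    (x₀ : X) (hx₀ : f x₀ ≤ (⨅ x, f x) + (ε : EReal)) :
    ∃ xbar : X, f xbar ≤ f x₀ ∧ dist xbar x₀ ≤ lam ∧
      ∀ x : X, x ≠ xbar → f xbar - (((ε / lam) * dist x xbar : ℝ) : EReal) < f x := by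
  set m : EReal := ⨅ x, f x with hm
  have hm_ne_bot : m ≠ ⊥ := by
    intro h
    rw [h] at hx₀
    rw [EReal.bot_add] at hx₀
    exact hbot x₀ (le_bot_iff.mp hx₀)
  have hm_ne_top : m ≠ ⊤ := by
    obtain ⟨x, hx⟩ := hproper
    intro h
    exact hx (top_le_iff.mp (h ▸ iInf_le f x))
  have hm_le : ∀ x, m ≤ f x := fun x => iInf_le f x
  have hfx₀_ne_top : f x₀ ≠ ⊤ := by
    intro h
    rw [h] at hx₀
    exact (EReal.add_lt_top hm_ne_top (by simp)).ne (top_le_iff.mp hx₀)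
  set Y : Set X := {x | f x ≤ f x₀} with hY
  have hYclosed : IsClosed Y := hlsc.isClosed_preimage (f x₀)
  haveI : CompleteSpace Y := hYclosed.completeSpace_coe
  have hx₀Y : x₀ ∈ Y := by show f x₀ ≤ f x₀; exact le_rfl
  have hfin : ∀ y : Y, f y ≠ ⊤ ∧ f y ≠ ⊥ := by
    intro y
    exact ⟨fun h => hfx₀_ne_top (top_le_iff.mp (h ▸ y.2)), hbot y⟩
  set g : Y → ℝ := fun y => (f y).toReal with hg
  have hgcoe : ∀ y : Y, (g y : EReal) = f y := fun y =>
    EReal.coe_toReal (hfin y).1 (hfin y).2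
  have hglsc : LowerSemicontinuous g := by
    intro y c hc
    have hflsc : LowerSemicontinuousAt (fun z : Y => f z) y :=
      (LowerSemicontinuous.comp hlsc continuous_subtype_val) y
    have hc' : ((c : ℝ) : EReal) < f y := by
      rw [← hgcoe y]; exact_mod_cast hc
    filter_upwards [hflsc _ hc'] with z hz
    have : ((c : ℝ) : EReal) < (g z : EReal) := by rwa [hgcoe z]
    exact_mod_cast this
  have hgB : ∀ y : Y, m.toReal ≤ g y := by
    intro y
    exact EReal.toReal_le_toReal (hm_le y) hm_ne_bot (hfin y).1
  set α : ℝ := ε / lam with hα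
  have hαpos : 0 < α := div_pos hε hlam
  obtain ⟨ybar, hy1, hy2⟩ := ekeland_real g hglsc m.toReal hgB α hαpos ⟨x₀, hx₀Y⟩
  refine ⟨ybar, ybar.2, ?_, ?_⟩
  · -- distance bound
    have hgx₀ : g ⟨x₀, hx₀Y⟩ ≤ m.toReal + ε := by
      have h1 : f x₀ ≤ m + (ε : EReal) := hx₀
      have h2 : (f x₀).toReal ≤ (m + (ε : EReal)).toReal :=
        EReal.toReal_le_toReal h1 (hbot x₀) ((EReal.add_lt_top hm_ne_top (by simp)).ne)
      rwa [EReal.toReal_add hm_ne_top hm_ne_bot (by simp) (by simp),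
        EReal.toReal_coe] at h2
    have hd : dist ybar (⟨x₀, hx₀Y⟩ : Y) = dist (ybar : X) x₀ := rfl
    have h3 : α * dist (ybar : X) x₀ ≤ ε := by
      have := hgB ybar
      rw [hd] at hy1
      linarith
    have h4 : ε * dist (ybar : X) x₀ ≤ ε * lam := by
      rw [hα, div_mul_eq_mul_div, div_le_iff₀ hlam] at h3
      linarith
    exact le_of_mul_le_mul_left h4 hε
  · intro x hx
    by_cases hxY : x ∈ Y
    · have hne : (⟨x, hxY⟩ : Y) ≠ ybar := fun h => hx (congrArg Subtype.val h)
      have h5 : g ybar - α * dist (⟨x, hxY⟩ : Y) ybar < g (⟨x, hxY⟩ : Y) := hy2 _ hne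
      have hd : dist (⟨x, hxY⟩ : Y) ybar = dist x (ybar : X) := rfl
      rw [hd] at h5
      have : ((g ybar - α * dist x (ybar : X) : ℝ) : EReal) < ((g ⟨x, hxY⟩ : ℝ) : EReal) :=
        EReal.coe_lt_coe_iff.mpr h5
      rw [EReal.coe_sub, hgcoe, hgcoe] at this
      exact this
    · have hxgt : f x₀ < f x := lt_of_not_ge hxY
      have h6 : f ybar - ((α * dist x (ybar : X) : ℝ) : EReal) ≤ f ybar := by
        rw [← hgcoe ybar, ← EReal.coe_sub]
        apply EReal.coe_le_coe_iff.mpr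
        have : 0 ≤ α * dist x (ybar : X) := mul_nonneg hαpos.le dist_nonneg
        linarith
      exact lt_of_le_of_lt (h6.trans ybar.2) hxgt
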